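/- For every n ≥ 0, the number of Dyck paths of semilength 2n+1 such that no peak and no valley occurs at a positive even height equals the binomial coefficient C(2n, n). -/

import Mathlib

/-- The height of a path (list of up/down steps, `true` = up = +1, `false` = down = −1)
after its first `k` steps. -/
def heightAt (p : List Bool) (k : ℕ) : ℤ :=
  ((p.take k).count true : ℤ) - ((p.take k).count false : ℤ)

/-- A Dyck path: all partial sums nonnegative and total sum zero. -/
def IsDyck (p : List Bool) : Prop :=
  (∀ k, 0 ≤ heightAt p k) ∧ heightAt p p.length = 0

/-- A peak at height `h`: an up-step immediately followed by a down-step,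
the height after the up-step being `h`. -/
def HasPeakAt (p : List Bool) (h : ℤ) : Prop :=
  ∃ i, p[i]? = some true ∧ p[i+1]? = some false ∧ heightAt p (i+1) = h

/-- A valley at height `h`: a down-step immediately followed by an up-step,
the height after the down-step being `h`. -/
def HasValleyAt (p : List Bool) (h : ℤ) : Prop :=
  ∃ i, p[i]? = some false ∧ p[i+1]? = some true ∧ heightAt p (i+1) = h

/-- `p` has an up-run of length `m`: a maximal block of exactly `m` consecutive up-steps. -/
def HasUpRun (p : List Bool) (m : ℕ) : Prop :=
  ∃ i, (∀ j, j < m → p[i+j]? = some true) ∧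
    (i = 0 ∨ p[i-1]? = some false) ∧
    (p[i+m]? = some false ∨ i + m = p.length)

/-- `p` has a down-run of length `m`: a maximal block of exactly `m` consecutive down-steps. -/
def HasDownRun (p : List Bool) (m : ℕ) : Prop :=
  ∃ i, (∀ j, j < m → p[i+j]? = some false) ∧
    (i = 0 ∨ p[i-1]? = some true) ∧
    (p[i+m]? = some true ∨ i + m = p.length)

/-- Generating function of the set of Dyck paths satisfying `Q`:
the coefficient of `z^n` is the number of such paths of semilength `n`. -/
noncomputable def genFun (Q : List Bool → Prop) : PowerSeries ℕ :=
  PowerSeries.mk fun n => Set.ncard {p : List Bool | p.length = 2 * n ∧ IsDyck p ∧ Q p}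

namespace Aux

def val (b : Bool) : ℤ := if b then 1 else -1

def ssum (s : List Bool) : ℤ := (s.count true : ℤ) - (s.count false : ℤ)

@[simp] lemma ssum_nil : ssum [] = 0 := rfl

@[simp] lemma ssum_cons (a : Bool) (s : List Bool) : ssum (a :: s) = val a + ssum s := by
  cases a <;> simp [ssum, val, List.count_cons] <;> ring

@[simp] lemma ssum_append (s t : List Bool) : ssum (s ++ t) = ssum s + ssum t := by
  simp [ssum, List.count_append]; ring

@[simp] lemma ssum_reverse (s : List Bool) : ssum s.reverse = ssum s := by
  simp [ssum]

lemma ssum_eq (s : List Bool) : ssum s = 2 * (s.count true : ℤ) - s.length := by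
  have : s.count true + s.count false = s.length := by
    have := s.count_true_add_count_false  -- may not exist
    exact this
  simp [ssum]; omega

@[simp] lemma heightAt_nil (k : ℕ) : heightAt [] k = 0 := by simp [heightAt]

@[simp] lemma heightAt_zero (p : List Bool) : heightAt p 0 = 0 := by simp [heightAt]

lemma heightAt_cons (a : Bool) (p : List Bool) (k : ℕ) :
    heightAt (a :: p) (k + 1) = val a + heightAt p k := by
  cases a <;> simp [heightAt, val, List.count_cons] <;> ring

lemma heightAt_eq_ssum_take (p : List Bool) (k : ℕ) : heightAt p k = ssum (p.take k) := rfl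

def OkP (d : Bool) (h : ℤ) : List Bool → Prop
  | [] => h = 0
  | [_] => False
  | a :: b :: r => a = (if h = 0 then true else d) ∧ OkP b (h + val a + val b) r

def build (d : Bool) (h : ℤ) : List Bool → List Bool
  | [] => []
  | t :: s =>
    let f := if h = 0 then true else d
    f :: t :: build t (h + val f + val t) s

def seconds : List Bool → List Bool
  | [] => []
  | [_] => []
  | _ :: b :: r => b :: seconds r

def finalH (d : Bool) (h : ℤ) : List Bool → ℤ
  | [] => h
  | t :: s =>
    let f := if h = 0 then true else d
    finalH t (h + val f + val t) s

@[simp] lemma length_build (d : Bool) (h : ℤ) (s : List Bool) :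
    (build d h s).length = 2 * s.length := by
  induction s generalizing d h with
  | nil => rfl
  | cons t s ih => simp [build, ih]; ring

@[simp] lemma seconds_build (d : Bool) (h : ℤ) (s : List Bool) :
    seconds (build d h s) = s := by
  induction s generalizing d h with
  | nil => rfl
  | cons t s ih => simp [build, seconds, ih]

lemma build_seconds {d : Bool} {h : ℤ} {p : List Bool} (hp : OkP d h p) :
    build d h (seconds p) = p := by
  induction p using seconds.induct generalizing d h with
  | case1 => rfl
  | case2 a => exact absurd hp (by simp [OkP])
  | case3 a b r ih =>
    obtain ⟨ha, hr⟩ := hp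
    simp only [seconds, build, ← ha, List.cons.injEq]
    exact ⟨trivial, trivial, ih hr⟩

lemma okP_build (d : Bool) (h : ℤ) (s : List Bool) :
    OkP d h (build d h s) ↔ finalH d h s = 0 := by
  induction s generalizing d h with
  | nil => simp [build, OkP, finalH]
  | cons t s ih => simp [build, OkP, finalH, ih]

def NoTurn (h : ℤ) (p : List Bool) : Prop :=
  ∀ i x y, p[i]? = some x → p[i+1]? = some y → x ≠ y →
    ¬(0 < h + heightAt p (i+1) ∧ Even (h + heightAt p (i+1)))

def Spec (d : Bool) (h : ℤ) (p : List Bool) : Prop :=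
  (∀ k, 0 ≤ h + heightAt p k) ∧ (h + heightAt p p.length = 0) ∧ NoTurn h p ∧
    (∀ x, p[0]? = some x → 0 < h → x = d)

lemma spec_iff_okP (p : List Bool) : ∀ d (h : ℤ), h % 2 = 0 → 0 ≤ h →
    (Spec d h p ↔ OkP d h p) := by
  induction p using seconds.induct with
  | case1 =>
    intro d h _ h0
    simp only [OkP, Spec, NoTurn]
    constructor
    · rintro ⟨-, h2, -, -⟩; simpa using h2
    · rintro rfl
      refine ⟨fun k => by simpa using h0, by simp, ?_, ?_⟩ <;> intros <;> simp_all
  | case2 a =>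
    intro d h he h0
    simp only [OkP, iff_false, Spec]
    rintro ⟨-, h2, -, -⟩
    have h1 : heightAt [a] 1 = val a := by
      have := heightAt_cons a [] 0; simpa using this
    simp only [List.length_cons, List.length_nil, zero_add, h1] at h2
    cases a <;> simp [val] at h2 <;> omega
  | case3 a b r ih =>
    intro d h he h0
    have A1 : heightAt (a :: b :: r) 1 = val a := by
      have := heightAt_cons a (b :: r) 0; simpa using this
    have A2 : ∀ k, heightAt (a :: b :: r) (k + 2) = val a + val b + heightAt r k := by
      intro k
      have h1 := heightAt_cons a (b :: r) (k + 1)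
      have h2 := heightAt_cons b r k
      calc heightAt (a :: b :: r) (k + 2) = val a + heightAt (b :: r) (k+1) := h1
        _ = val a + val b + heightAt r k := by rw [h2]; ring
    have he' : (h + val a + val b) % 2 = 0 := by
      cases a <;> cases b <;> simp [val] <;> omega
    have HE : ∀ k, h + heightAt (a :: b :: r) (k + 2) = h + val a + val b + heightAt r k := by
      intro k; rw [A2 k]; ring
    constructor
    · rintro ⟨hk, hend, hnt, hhd⟩
      have h0' : 0 ≤ h + val a + val b := by
        have := hk 2
        rw [HE 0] at this
        simpa using this
      have ha : a = (if h = 0 then true else d) := by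
        by_cases hz : h = 0
        · subst hz
          have := hk 1
          rw [A1] at this
          simp only [if_pos rfl]
          cases a
          · simp [val] at this
          · rfl
        · have hpos : 0 < h := lt_of_le_of_ne h0 (Ne.symm hz)
          simp only [if_neg hz]
          exact hhd a rfl hpos
      refine ⟨ha, (ih b _ he' h0').mp ?_⟩
      refine ⟨?_, ?_, ?_, ?_⟩
      · intro k
        have := hk (k + 2)
        rwa [HE k] at this
      · have := hend
        simp only [List.length_cons] at this
        rwa [show r.length + 1 + 1 = r.length + 2 from rfl, HE r.length] at this
      · intro i x y hx hy hxy hc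
        refine hnt (i + 2) x y (by simpa using hx) (by simpa using hy) hxy ?_
        rw [show i + 2 + 1 = (i + 1) + 2 from rfl, HE (i + 1)]
        exact hc
      · intro x hx hpos
        by_contra hne
        refine hnt 1 b x (by simp) (by simpa using hx) (fun e => hne e.symm) ?_
        rw [show (1:ℕ) + 1 = 0 + 2 from rfl, HE 0]
        simp only [heightAt_zero, add_zero]
        exact ⟨hpos, by rw [Int.even_iff]; omega⟩
    · rintro ⟨ha, hok⟩
      have hge2 : h = 0 ∨ 2 ≤ h := by omega
      have hva : 0 ≤ h + val a := by
        rcases hge2 with hz | hge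
        · subst hz; simp only [if_pos rfl] at ha; subst ha; simp [val]
        · cases a <;> simp [val] <;> omega
      have h0' : 0 ≤ h + val a + val b := by
        rcases hge2 with hz | hge
        · subst hz; simp only [if_pos rfl] at ha; subst ha; cases b <;> simp [val]
        · cases a <;> cases b <;> simp [val] <;> omega
      obtain ⟨hk', hend', hnt', hhd'⟩ := (ih b _ he' h0').mpr hok
      refine ⟨?_, ?_, ?_, ?_⟩
      · intro k
        match k with
        | 0 => simpa using h0
        | 1 => rw [A1]; exact hva
        | (k + 2) => rw [HE k]; exact hk' k
      · simp only [List.length_cons]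
        rw [show r.length + 1 + 1 = r.length + 2 from rfl, HE r.length]
        exact hend'
      · intro i x y hx hy hxy hc
        match i with
        | 0 =>
          simp only [List.getElem?_cons_zero, Option.some.injEq] at hx
          have := hc.2
          rw [show (0:ℕ) + 1 = 1 from rfl, A1, Int.even_iff] at this
          cases x <;> simp [val, ← hx] at this <;> omega
        | 1 =>
          simp only [List.getElem?_cons_succ, List.getElem?_cons_zero, Option.some.injEq] at hx hy
          have hpos : 0 < h + val a + val b := by
            have := hc.1
            rw [show (1:ℕ) + 1 = 0 + 2 from rfl, HE 0] at this
            simpa using this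
          have := hhd' y (by simpa using hy) hpos
          exact hxy (hx ▸ this ▸ rfl)
        | (i + 2) =>
          refine hnt' i x y (by simpa using hx) (by simpa using hy) hxy ?_
          rwa [show i + 2 + 1 = (i + 1) + 2 from rfl, HE (i + 1)] at hc
      · intro x hx hpos
        simp only [List.getElem?_cons_zero, Option.some.injEq] at hx
        rw [← hx, ha, if_neg (by omega : h ≠ 0)]

def bnd (d : Bool) (h : ℤ) : ℤ := if h = 0 then 1 else h / 2 + (if d then 1 else 0)

def Cnd (d : Bool) (h : ℤ) (s : List Bool) : Prop :=
  if s = [] then h = 0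
  else (∀ j, j < s.length → ssum (s.drop j) ≤ -1) ∧ ssum s ≤ -(bnd d h)

lemma suff_cons (t : Bool) (s : List Bool) :
    (∀ j, j < (t :: s).length → ssum ((t :: s).drop j) ≤ -1) ↔
      (val t + ssum s ≤ -1 ∧ ∀ j, j < s.length → ssum (s.drop j) ≤ -1) := by
  constructor
  · intro H
    refine ⟨by simpa [ssum_cons] using H 0 (by simp), fun j hj => ?_⟩
    have := H (j + 1) (by simpa using Nat.succ_lt_succ hj)
    simpa using this
  · rintro ⟨h1, H⟩ j hj
    cases j with
    | zero => simpa [ssum_cons] using h1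
    | succ j =>
      simp only [List.drop_succ_cons]
      exact H j (by simpa using hj)

lemma arith (d t : Bool) (h A : ℤ) (he : h % 2 = 0) (h0 : 0 ≤ h) (hA1 : A ≤ -1) :
    A ≤ -(bnd t (h + val (if h = 0 then true else d) + val t)) ↔
      (val t + A ≤ -1 ∧ val t + A ≤ -(bnd d h)) := by
  cases d <;> cases t <;> by_cases hz : h = 0 <;>
    simp [bnd, val, hz] <;> first | omega | (split_ifs <;> omega)

lemma finalH_iff_cnd (s : List Bool) : ∀ d (h : ℤ), h % 2 = 0 → 0 ≤ h →
    (finalH d h s = 0 ↔ Cnd d h s) := by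
  induction s with
  | nil => intro d h _ _; simp [finalH, Cnd]
  | cons t s ih =>
    intro d h he h0
    have hf : finalH d h (t :: s) = finalH t (h + val (if h = 0 then true else d) + val t) s := rfl
    have he' : (h + val (if h = 0 then true else d) + val t) % 2 = 0 := by
      by_cases hz : h = 0 <;> cases d <;> cases t <;> simp [val, hz] <;> omega
    have h0' : 0 ≤ h + val (if h = 0 then true else d) + val t := by
      by_cases hz : h = 0 <;> cases d <;> cases t <;> simp [val, hz] <;> omega
    rw [hf, ih t _ he' h0']
    by_cases hs : s = []
    · subst hs
      unfold Cnd
      simp only [if_pos rfl, if_neg (List.cons_ne_nil t [])]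
      by_cases hz : h = 0 <;> cases d <;> cases t <;>
        simp [val, bnd, hz] <;> first | omega | (split_ifs <;> omega)
    · unfold Cnd
      rw [if_neg hs, if_neg (List.cons_ne_nil t s), suff_cons, ssum_cons]
      constructor
      · rintro ⟨Q, hA⟩
        have hA1 : ssum s ≤ -1 := by
          simpa using Q 0 (List.length_pos_iff.mpr hs)
        have := (arith d t h (ssum s) he h0 hA1).mp hA
        exact ⟨⟨this.1, Q⟩, this.2⟩
      · rintro ⟨⟨h1, Q⟩, h2⟩
        have hA1 : ssum s ≤ -1 := by
          simpa using Q 0 (List.length_pos_iff.mpr hs)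
        exact ⟨Q, (arith d t h (ssum s) he h0 hA1).mpr ⟨h1, h2⟩⟩
lemma cnd_phi (w : List Bool) :
    Cnd true 0 (w.reverse ++ [false]) ↔ ∀ i, ssum (w.take i) ≤ 0 := by
  have hne : w.reverse ++ [false] ≠ [] := by simp
  have hb : bnd true 0 = 1 := rfl
  have hdrop : ∀ j, j ≤ w.length →
      ssum ((w.reverse ++ [false]).drop j) = ssum (w.take (w.length - j)) - 1 := by
    intro j hj
    rw [List.drop_append_of_le_length (by simpa), List.drop_reverse]
    simp [val]
    omega
  unfold Cnd
  rw [if_neg hne, hb]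
  constructor
  · rintro ⟨Q, -⟩ i
    rcases le_or_gt i w.length with hi | hi
    · have := Q (w.length - i) (by simp)
      rw [hdrop _ (by omega)] at this
      rw [show w.length - (w.length - i) = i from by omega] at this
      omega
    · have := Q 0 (by simp)
      rw [hdrop 0 (by omega)] at this
      simp only [Nat.sub_zero, List.take_length] at this
      rw [List.take_of_length_le hi.le]
      omega
  · intro H
    have hw : ssum (w.reverse ++ [false]) ≤ -1 := by
      have := H w.length
      simp only [List.take_length] at this
      simp [val]
      omega
    refine ⟨fun j hj => ?_, hw⟩
    rcases le_or_gt j w.length with hjl | hjl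
    · rw [hdrop j hjl]
      have := H (w.length - j)
      omega
    · exfalso
      simp at hj
      omega
def Pre (w : List Bool) : Prop := ∀ i, ssum (w.take i) ≤ 0
def Tset (L : ℕ) : Set (List Bool) := {w | w.length = L ∧ Pre w}
def Zset (L : ℕ) : Set (List Bool) := {w | w.length = L ∧ Pre w ∧ ssum w = 0}

lemma finite_T (L : ℕ) : (Tset L).Finite :=
  (List.finite_length_eq Bool L).subset fun _ hx => hx.1
lemma finite_Z (L : ℕ) : (Zset L).Finite :=
  (List.finite_length_eq Bool L).subset fun _ hx => hx.1

lemma Z_subset_T (L : ℕ) : Zset L ⊆ Tset L := fun _ hx => ⟨hx.1, hx.2.1⟩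

lemma pre_concat (w : List Bool) (t : Bool) :
    Pre (w ++ [t]) ↔ Pre w ∧ ssum w + val t ≤ 0 := by
  constructor
  · intro H
    refine ⟨fun i => ?_, ?_⟩
    · rcases le_or_gt i w.length with hi | hi
      · have := H i
        rwa [List.take_append_of_le_length hi] at this
      · rw [List.take_of_length_le hi.le]
        have := H w.length
        rwa [List.take_append_of_le_length le_rfl, List.take_length] at this
    · have := H (w.length + 1)
      rw [List.take_of_length_le (by simp)] at this
      simpa using this
  · rintro ⟨H, ht⟩ i
    rcases le_or_gt i w.length with hi | hi
    · rw [List.take_append_of_le_length hi]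
      exact H i
    · rw [List.take_of_length_le (by simp; omega)]
      simpa using ht

lemma T_split (L : ℕ) :
    Tset (L + 1) = (fun u => u ++ [false]) '' Tset L ∪
      (fun u => u ++ [true]) '' {u | u ∈ Tset L ∧ ssum u ≤ -1} := by
  ext w
  constructor
  · rintro ⟨hlen, hpre⟩
    have hne : w ≠ [] := by intro h; subst h; simp at hlen
    have hrep := List.dropLast_append_getLast hne
    have hlu : w.dropLast.length = L := by
      have := @List.length_dropLast _ w; omega
    rw [← hrep] at hpre
    rw [pre_concat] at hpre
    obtain ⟨hpu, htot⟩ := hpre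
    cases hlast : w.getLast hne with
    | false => exact Or.inl ⟨w.dropLast, ⟨hlu, hpu⟩, by rw [← hlast]; exact hrep⟩
    | true =>
      refine Or.inr ⟨w.dropLast, ⟨⟨hlu, hpu⟩, ?_⟩, by rw [← hlast]; exact hrep⟩
      rw [hlast] at htot
      simp [val] at htot
      omega
  · rintro (⟨u, ⟨hlen, hpre⟩, rfl⟩ | ⟨u, ⟨⟨hlen, hpre⟩, hs⟩, rfl⟩)
    · refine ⟨by simp [hlen], (pre_concat u false).mpr ⟨hpre, ?_⟩⟩
      have := hpre u.length
      rw [List.take_length] at this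
      simp [val]; omega
    · refine ⟨by simp [hlen], (pre_concat u true).mpr ⟨hpre, ?_⟩⟩
      simp [val]; omega

lemma subT_odd (L : ℕ) (hL : L % 2 = 1) : {u | u ∈ Tset L ∧ ssum u ≤ -1} = Tset L := by
  ext u
  simp only [Set.mem_setOf_eq, and_iff_left_iff_imp]
  rintro ⟨hlen, hpre⟩
  have h1 := hpre u.length
  rw [List.take_length] at h1
  have h2 := ssum_eq u
  rw [hlen] at h2
  omega

lemma subT_even (L : ℕ) (hL : L % 2 = 0) :
    {u | u ∈ Tset L ∧ ssum u ≤ -1} = Tset L \ Zset L := by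
  ext u
  simp only [Set.mem_setOf_eq, Set.mem_diff]
  constructor
  · rintro ⟨hT, hs⟩
    exact ⟨hT, fun hZ => by have := hZ.2.2; omega⟩
  · rintro ⟨hT, hZ⟩
    refine ⟨hT, ?_⟩
    have h1 := hT.2 u.length
    rw [List.take_length] at h1
    have h2 := ssum_eq u
    rw [hT.1] at h2
    have h3 : ssum u ≠ 0 := fun h => hZ ⟨hT.1, hT.2, h⟩
    omega

lemma concat_injective (t : Bool) : Function.Injective (fun u : List Bool => u ++ [t]) :=
  fun _ _ h => List.append_cancel_right h

lemma disj (s₁ s₂ : Set (List Bool)) :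
    Disjoint ((fun u => u ++ [false]) '' s₁) ((fun u => u ++ [true]) '' s₂) := by
  rw [Set.disjoint_left]
  rintro x ⟨u, -, rfl⟩ ⟨v, -, hv⟩
  simp only at hv
  have h1 : (v ++ [true]).getLast? = (u ++ [false]).getLast? := by rw [hv]
  rw [List.getLast?_concat, List.getLast?_concat] at h1
  simp at h1

lemma card_T_split (L : ℕ) :
    (Tset (L + 1)).ncard = (Tset L).ncard + {u | u ∈ Tset L ∧ ssum u ≤ -1}.ncard := by
  rw [T_split L, Set.ncard_union_eq (disj _ _)
    (((finite_T L).image _))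
    ((((finite_T L).subset (fun u hu => hu.1)).image _)),
    Set.ncard_image_of_injective _ (concat_injective false),
    Set.ncard_image_of_injective _ (concat_injective true)]

lemma card_T_odd (L : ℕ) (hL : L % 2 = 1) :
    (Tset (L + 1)).ncard = 2 * (Tset L).ncard := by
  rw [card_T_split, subT_odd L hL]; ring

lemma card_T_even (L : ℕ) (hL : L % 2 = 0) :
    (Tset (L + 1)).ncard + (Zset L).ncard = 2 * (Tset L).ncard := by
  rw [card_T_split, subT_even L hL, add_assoc,
    Set.ncard_diff_add_ncard_of_subset (Z_subset_T L) (finite_T L)]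
  ring

lemma T_zero : Tset 0 = {[]} := by
  ext w
  simp only [Tset, Set.mem_setOf_eq, List.length_eq_zero_iff, Set.mem_singleton_iff]
  constructor
  · rintro ⟨rfl, -⟩; rfl
  · rintro rfl; exact ⟨rfl, fun i => by simp⟩

open DyckStep

def toStep (b : Bool) : DyckStep := if b then D else U
def ofStep (s : DyckStep) : Bool := s = D

lemma toStep_injective : Function.Injective toStep := by
  intro a b h; cases a <;> cases b <;> simp [toStep] at h ⊢
lemma ofStep_injective : Function.Injective ofStep := by
  intro a b h; cases a <;> cases b <;> simp [ofStep] at h ⊢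
@[simp] lemma ofStep_toStep (b : Bool) : ofStep (toStep b) = b := by cases b <;> rfl
@[simp] lemma toStep_ofStep (s : DyckStep) : toStep (ofStep s) = s := by cases s <;> rfl

lemma count_map_toStep_U (l : List Bool) : (l.map toStep).count U = l.count false := by
  rw [show U = toStep false from rfl, List.count_map_of_injective _ _ toStep_injective]
lemma count_map_toStep_D (l : List Bool) : (l.map toStep).count D = l.count true := by
  rw [show D = toStep true from rfl, List.count_map_of_injective _ _ toStep_injective]
lemma count_map_ofStep_t (l : List DyckStep) : (l.map ofStep).count true = l.count D := by
  rw [show true = ofStep D from rfl, List.count_map_of_injective _ _ ofStep_injective]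
lemma count_map_ofStep_f (l : List DyckStep) : (l.map ofStep).count false = l.count U := by
  rw [show false = ofStep U from rfl, List.count_map_of_injective _ _ ofStep_injective]

noncomputable def zEquiv (n : ℕ) : (Zset (2 * n)) ≃ { p : DyckWord // p.semilength = n } where
  toFun w :=
    ⟨⟨(w : List Bool).map toStep, by
        have h0 : 2 * (((w : List Bool).count true : ℤ)) - ((w : List Bool).length : ℤ) = 0 := by
          rw [← ssum_eq]; exact w.2.2.2
        have hcc := (w : List Bool).count_true_add_count_false
        rw [count_map_toStep_U, count_map_toStep_D]
        omega, by
        intro i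
        have h1 : ssum ((w : List Bool).take i) ≤ 0 := w.2.2.1 i
        rw [ssum_eq] at h1
        have hcc := ((w : List Bool).take i).count_true_add_count_false
        rw [← List.map_take, count_map_toStep_U, count_map_toStep_D]
        omega⟩, by
      show ((w : List Bool).map toStep).count U = n
      rw [count_map_toStep_U]
      have h0 : 2 * (((w : List Bool).count true : ℤ)) - ((w : List Bool).length : ℤ) = 0 := by
        rw [← ssum_eq]; exact w.2.2.2
      have hcc := (w : List Bool).count_true_add_count_false
      have hlen : (w : List Bool).length = 2 * n := w.2.1
      omega⟩
  invFun p :=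
    ⟨(p.1 : List DyckStep).map ofStep, by
      have hsl : 2 * p.1.semilength = (p.1 : List DyckStep).length :=
        p.1.two_mul_semilength_eq_length
      have hsln : p.1.semilength = n := p.2
      refine ⟨by rw [List.length_map]; omega, fun i => ?_, ?_⟩
      · have h1 := p.1.count_D_le_count_U i
        rw [ssum_eq, ← List.map_take, count_map_ofStep_t, List.length_map]
        have hcc := (((p.1 : List DyckStep).take i).map ofStep).count_true_add_count_false
        rw [count_map_ofStep_t, count_map_ofStep_f, List.length_map] at hcc
        omega
      · have h1 := p.1.count_U_eq_count_D
        rw [ssum_eq]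
        have hcc := ((p.1 : List DyckStep).map ofStep).count_true_add_count_false
        rw [count_map_ofStep_t, count_map_ofStep_f, List.length_map] at hcc
        rw [count_map_ofStep_t, List.length_map]
        omega⟩
  left_inv w := by
    apply Subtype.ext
    simp [List.map_map, Function.comp_def]
  right_inv p := by
    apply Subtype.ext
    apply DyckWord.ext
    simp [List.map_map, Function.comp_def]

lemma card_Z (n : ℕ) : (Zset (2 * n)).ncard = catalan n := by
  rw [← Nat.card_coe_set_eq, Nat.card_congr (zEquiv n), Nat.card_eq_fintype_card,
    DyckWord.card_dyckWord_semilength_eq_catalan]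

lemma card_T_two_mul (n : ℕ) : (Tset (2 * n)).ncard = Nat.centralBinom n := by
  induction n with
  | zero =>
    rw [show 2 * 0 = 0 from rfl, T_zero, Set.ncard_singleton, Nat.centralBinom_zero]
  | succ n ih =>
    have h1 := card_T_even (2 * n) (by omega)
    have h2 := card_T_odd (2 * n + 1) (by omega)
    have hz := card_Z n
    have hcat := succ_mul_catalan_eq_centralBinom n
    have hcb := Nat.succ_mul_centralBinom_succ n
    rw [show 2 * (n + 1) = (2 * n + 1) + 1 from by ring, h2]
    apply Nat.eq_of_mul_eq_mul_left (Nat.succ_pos n)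
    rw [hcb]
    have e : (n + 1) * (Tset (2 * n + 1)).ncard + Nat.centralBinom n
        = 2 * (n + 1) * Nat.centralBinom n := by
      calc (n + 1) * (Tset (2 * n + 1)).ncard + Nat.centralBinom n
          = (n + 1) * (Tset (2 * n + 1)).ncard + (n + 1) * catalan n := by rw [hcat]
        _ = (n + 1) * ((Tset (2 * n + 1)).ncard + catalan n) := by ring
        _ = (n + 1) * ((Tset (2 * n + 1)).ncard + (Zset (2 * n)).ncard) := by rw [hz]
        _ = (n + 1) * (2 * (Tset (2 * n)).ncard) := by rw [h1]
        _ = 2 * (n + 1) * (Tset (2 * n)).ncard := by ring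
        _ = 2 * (n + 1) * Nat.centralBinom n := by rw [ih]
    zify at e ⊢
    linear_combination 2 * e
def Sset (m : ℕ) : Set (List Bool) := {s | s.length = m ∧ finalH true 0 s = 0}

lemma spec_zero_iff (p : List Bool) :
    Spec true 0 p ↔ (IsDyck p ∧ ∀ h : ℤ, 0 < h → Even h →
      ¬ HasPeakAt p h ∧ ¬ HasValleyAt p h) := by
  unfold Spec IsDyck NoTurn
  simp only [zero_add]
  constructor
  · rintro ⟨h1, h2, h3, -⟩
    refine ⟨⟨h1, h2⟩, fun h hpos hev => ⟨?_, ?_⟩⟩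
    · rintro ⟨i, hx, hy, hh⟩
      exact h3 i true false hx hy (by simp) ⟨hh ▸ hpos, hh ▸ hev⟩
    · rintro ⟨i, hx, hy, hh⟩
      exact h3 i false true hx hy (by simp) ⟨hh ▸ hpos, hh ▸ hev⟩
  · rintro ⟨⟨h1, h2⟩, H⟩
    refine ⟨h1, h2, ?_, ?_⟩
    · intro i x y hx hy hxy hc
      cases x <;> cases y
      · exact hxy rfl
      · exact (H _ hc.1 hc.2).2 ⟨i, hx, hy, rfl⟩
      · exact (H _ hc.1 hc.2).1 ⟨i, hx, hy, rfl⟩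
      · exact hxy rfl
    · intro x _ h0x
      exact absurd h0x (by norm_num)

lemma A_eq (m : ℕ) :
    {p : List Bool | p.length = 2 * m ∧ IsDyck p ∧ (∀ h : ℤ, 0 < h → Even h →
        ¬ HasPeakAt p h ∧ ¬ HasValleyAt p h)}
      = build true 0 '' Sset m := by
  ext p
  simp only [Set.mem_setOf_eq, Set.mem_image]
  constructor
  · rintro ⟨hlen, hd, hq⟩
    have hok : OkP true 0 p :=
      (spec_iff_okP p true 0 (by norm_num) le_rfl).mp ((spec_zero_iff p).mpr ⟨hd, hq⟩)
    refine ⟨seconds p, ⟨?_, ?_⟩, build_seconds hok⟩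
    · have := length_build true 0 (seconds p)
      rw [build_seconds hok] at this
      omega
    · rw [← okP_build, build_seconds hok]
      exact hok
  · rintro ⟨s, ⟨hlen, hfin⟩, rfl⟩
    have hok : OkP true 0 (build true 0 s) := (okP_build _ _ _).mpr hfin
    have hspec := (spec_zero_iff _).mp ((spec_iff_okP _ true 0 (by norm_num) le_rfl).mpr hok)
    exact ⟨by rw [length_build, hlen], hspec.1, hspec.2⟩

lemma S_eq (L : ℕ) : Sset (L + 1) = (fun w : List Bool => w.reverse ++ [false]) '' Tset L := by
  ext s
  simp only [Sset, Tset, Set.mem_setOf_eq, Set.mem_image]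
  constructor
  · rintro ⟨hlen, hfin⟩
    have hcnd : Cnd true 0 s := (finalH_iff_cnd s true 0 (by norm_num) le_rfl).mp hfin
    have hne : s ≠ [] := by intro h; subst h; simp at hlen
    have hrep := List.dropLast_append_getLast hne
    have hdl : s.dropLast.length = L := by
      have := @List.length_dropLast _ s; omega
    have hQ : ∀ j, j < s.length → ssum (s.drop j) ≤ -1 := by
      have := hcnd
      unfold Cnd at this
      rw [if_neg hne] at this
      exact this.1
    have h5 : s.drop (s.length - 1) = [s.getLast hne] := by
      have h6 := @List.drop_left _ s.dropLast [s.getLast hne]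
      rw [hrep] at h6
      rw [show s.length - 1 = s.dropLast.length from by omega]
      exact h6
    have hlast : s.getLast hne = false := by
      have hq := hQ (s.length - 1) (by omega)
      rw [h5] at hq
      cases hgl : s.getLast hne
      · rfl
      · rw [hgl] at hq
        simp [ssum, val] at hq
    have hφ : s.dropLast.reverse.reverse ++ [false] = s := by
      rw [List.reverse_reverse, ← hlast]
      exact hrep
    refine ⟨s.dropLast.reverse, ⟨by simp [hdl], ?_⟩, hφ⟩
    intro i
    have := (cnd_phi s.dropLast.reverse).mp (by rw [hφ]; exact hcnd)
    exact this i
  · rintro ⟨w, ⟨hlen, hpre⟩, rfl⟩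
    refine ⟨by simp [hlen], ?_⟩
    exact (finalH_iff_cnd _ true 0 (by norm_num) le_rfl).mpr ((cnd_phi w).mpr hpre)

lemma build_inj : Function.Injective (build true 0) := by
  intro s t h
  have hs := seconds_build true 0 s
  rw [h, seconds_build] at hs
  exact hs.symm

lemma phi_inj : Function.Injective (fun w : List Bool => w.reverse ++ [false]) := by
  intro a b h
  simp only at h
  exact List.reverse_injective (List.append_cancel_right h)


end Aux

/-- The number of Dyck paths of semilength `2n+1` such that no peak and no valley occurs at
a positive even height equals `C(2n, n)`. -/
theorem stmt7 (n : ℕ) :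
    Set.ncard {p : List Bool | p.length = 2 * (2 * n + 1) ∧ IsDyck p ∧
        (∀ h : ℤ, 0 < h → Even h → ¬ HasPeakAt p h ∧ ¬ HasValleyAt p h)} =
      Nat.choose (2 * n) n := by
  rw [Aux.A_eq (2 * n + 1), Set.ncard_image_of_injective _ Aux.build_inj,
    Aux.S_eq (2 * n), Set.ncard_image_of_injective _ Aux.phi_inj,
    Aux.card_T_two_mul, Nat.centralBinom_eq_two_mul_choose]
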